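/- Let n ∈ {1, 2}. There exists a constant C (depending only on n) such that for every x ∈ ℝⁿ and every M ≥ 0: Γ₊(x, ∅, C⁻¹·M) ⊂ 𝒞₊(x, M) ⊂ Γ₊(x, ∅, C·M). Here Γ₊(x, ∅, M) denotes the set of 1-jets at x of nonnegative C² functions F : ℝⁿ → ℝ with ‖F‖_{C²(ℝⁿ)} ≤ M. -/

import Mathlib

noncomputable section

/-- `ℝⁿ` with the Euclidean metric. -/
abbrev Euc (n : ℕ) : Type := EuclideanSpace ℝ (Fin n)

/-- Partial derivative of `F : ℝⁿ → ℝ` in the `i`-th coordinate direction. -/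
noncomputable def pd {n : ℕ} (i : Fin n) (F : Euc n → ℝ) : Euc n → ℝ :=
  fun x => fderiv ℝ F x (EuclideanSpace.single i 1)

/-- `Σ_{|α| ≤ 2} |∂^α F(x)|²`: the multi-indices of order `≤ 2` are `0`, the `e_i`, and
the `e_i + e_j` for `i ≤ j`. -/
noncomputable def c2SqAt {n : ℕ} (F : Euc n → ℝ) (x : Euc n) : ℝ :=
  (F x) ^ 2 + (∑ i : Fin n, (pd i F x) ^ 2) +
    ∑ p ∈ Finset.univ.filter (fun p : Fin n × Fin n => p.1 ≤ p.2),
      (pd p.1 (pd p.2 F) x) ^ 2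

/-- `‖F‖_{C²(ℝⁿ)} := sup_x (Σ_{|α|≤2} |∂^α F(x)|²)^{1/2} ≤ M`. -/
def C2NormLE {n : ℕ} (F : Euc n → ℝ) (M : ℝ) : Prop :=
  ∀ x : Euc n, Real.sqrt (c2SqAt F x) ≤ M

/-- The 1-jet of `F` at `x`: `𝒥_x F (y) = F(x) + ∇F(x) · (y − x)`. -/
noncomputable def jet {n : ℕ} (x : Euc n) (F : Euc n → ℝ) : Euc n → ℝ :=
  fun y => F x + fderiv ℝ F x (y - x)

/-- `P` is an affine (degree `≤ 1`) polynomial on `ℝⁿ`. -/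
def IsAffine {n : ℕ} (P : Euc n → ℝ) : Prop :=
  ∃ (L : Euc n →L[ℝ] ℝ) (c : ℝ), P = fun y => L y + c

/-- `Γ₊(x, ∅, M)`: the 1-jets at `x` of nonnegative `C²` functions of norm at most `M`. -/
def GammaPlusEmpty {n : ℕ} (x : Euc n) (M : ℝ) : Set (Euc n → ℝ) :=
  {P | ∃ F : Euc n → ℝ, ContDiff ℝ 2 F ∧ (∀ y : Euc n, 0 ≤ F y) ∧
        C2NormLE F M ∧ jet x F = P}

/-- `𝒞₊(x, M)`: affine polynomials `P` with
`(Σ_{|α|≤1} |∂^α P(x)|²)^{1/2} ≤ M`, `P(x) ≥ 0`, and `|∇P| ≤ √(4M·P(x))`. -/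
def CPlus {n : ℕ} (x : Euc n) (M : ℝ) : Set (Euc n → ℝ) :=
  {P | IsAffine P ∧
    Real.sqrt ((P x) ^ 2 + ∑ i : Fin n, (pd i P x) ^ 2) ≤ M ∧
    0 ≤ P x ∧
    ‖fderiv ℝ P x‖ ≤ Real.sqrt (4 * M * P x)}

/-! ### Auxiliary lemmas -/

lemma euc_decomp {n : ℕ} (v : Euc n) : v = ∑ i, v i • EuclideanSpace.single i 1 := by
  have := (EuclideanSpace.basisFun (Fin n) ℝ).sum_repr v
  simp only [EuclideanSpace.basisFun_repr, EuclideanSpace.basisFun_apply] at this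
  exact this.symm

lemma clm_apply_eq_sum {n : ℕ} (L : Euc n →L[ℝ] ℝ) (v : Euc n) :
    L v = ∑ i, v i * L (EuclideanSpace.single i 1) := by
  conv_lhs => rw [euc_decomp v]
  rw [map_sum]
  simp [smul_eq_mul]

lemma euc_norm_eq {n : ℕ} (v : Euc n) : ‖v‖ = Real.sqrt (∑ i, (v i)^2) := by
  rw [EuclideanSpace.norm_eq]
  congr 1
  refine Finset.sum_congr rfl fun i _ => ?_
  rw [Real.norm_eq_abs, sq_abs]

lemma opNorm_le_sqrt_sum {n : ℕ} (L : Euc n →L[ℝ] ℝ) :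
    ‖L‖ ≤ Real.sqrt (∑ i, (L (EuclideanSpace.single i 1))^2) := by
  refine ContinuousLinearMap.opNorm_le_bound _ (Real.sqrt_nonneg _) fun v => ?_
  rw [Real.norm_eq_abs, clm_apply_eq_sum L v, euc_norm_eq v]
  have h := Finset.sum_mul_sq_le_sq_mul_sq Finset.univ (fun i => v i)
    (fun i => L (EuclideanSpace.single i 1))
  have h2 : |∑ i, v i * L (EuclideanSpace.single i 1)| ≤
      Real.sqrt ((∑ i, (v i)^2) * ∑ i, (L (EuclideanSpace.single i 1))^2) := by
    rw [← Real.sqrt_sq_eq_abs]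
    exact Real.sqrt_le_sqrt h
  rw [Real.sqrt_mul (by positivity)] at h2
  linarith [h2]

lemma sum_sq_le_opNorm_sq {n : ℕ} (L : Euc n →L[ℝ] ℝ) :
    (∑ i, (L (EuclideanSpace.single i 1))^2) ≤ ‖L‖^2 := by
  set S := ∑ i, (L (EuclideanSpace.single i 1))^2 with hS
  have hS0 : 0 ≤ S := Finset.sum_nonneg fun i _ => sq_nonneg _
  set w : Euc n := WithLp.toLp 2 (fun i => L (EuclideanSpace.single i 1)) with hw
  have hLw : L w = S := by
    rw [clm_apply_eq_sum L w, hS]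
    refine Finset.sum_congr rfl fun i _ => ?_
    rw [sq]
  have hwn : ‖w‖ = Real.sqrt S := by
    rw [euc_norm_eq w, hS]
  have hb : S ≤ ‖L‖ * Real.sqrt S := by
    calc S = L w := hLw.symm
    _ ≤ |L w| := le_abs_self _
    _ ≤ ‖L‖ * ‖w‖ := L.le_opNorm w
    _ = ‖L‖ * Real.sqrt S := by rw [hwn]
  nlinarith [Real.sq_sqrt hS0, Real.sqrt_nonneg S, norm_nonneg L]

lemma le_sq_of_sqrt_le {a M : ℝ} (ha : 0 ≤ a) (h : Real.sqrt a ≤ M) : a ≤ M^2 := by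
  nlinarith [Real.sq_sqrt ha, Real.sqrt_nonneg a]

lemma sq_le_of_le_sqrt' {a b : ℝ} (ha : 0 ≤ a) (hb : 0 ≤ b) (h : a ≤ Real.sqrt b) :
    a^2 ≤ b := by
  nlinarith [Real.sq_sqrt hb, Real.sqrt_nonneg b]

lemma fderiv_affine {n : ℕ} (L : Euc n →L[ℝ] ℝ) (c : ℝ) (z : Euc n) :
    fderiv ℝ (fun y => L y + c) z = L :=
  (L.hasFDerivAt.add_const c).fderiv

lemma pd_affine {n : ℕ} (L : Euc n →L[ℝ] ℝ) (c : ℝ) (i : Fin n) (z : Euc n) :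
    pd i (fun y => L y + c) z = L (EuclideanSpace.single i 1) := by
  rw [pd, fderiv_affine]

lemma hasFDerivAt_pdvec {n : ℕ} {F : Euc n → ℝ} (hF : ContDiff ℝ 2 F) (v : Euc n) (y : Euc n) :
    HasFDerivAt (fun z => fderiv ℝ F z v)
      ((ContinuousLinearMap.apply ℝ ℝ v).comp (fderiv ℝ (fderiv ℝ F) y)) y := by
  have h1 : ContDiff ℝ 1 (fderiv ℝ F) := hF.fderiv_right (le_refl _)
  have h2 : HasFDerivAt (fderiv ℝ F) (fderiv ℝ (fderiv ℝ F) y) y :=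
    (h1.differentiable one_ne_zero y).hasFDerivAt
  exact (ContinuousLinearMap.apply ℝ ℝ v).hasFDerivAt.comp y h2

lemma pd_pd_eq {n : ℕ} {F : Euc n → ℝ} (hF : ContDiff ℝ 2 F) (i j : Fin n) (y : Euc n) :
    pd i (pd j F) y = fderiv ℝ (fderiv ℝ F) y (EuclideanSpace.single i 1)
      (EuclideanSpace.single j 1) := by
  have := (hasFDerivAt_pdvec hF (EuclideanSpace.single j 1) y).fderiv
  simp only [pd]
  rw [show pd j F = fun z => fderiv ℝ F z (EuclideanSpace.single j 1) from rfl, this]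
  rfl

lemma d2_symm {n : ℕ} {F : Euc n → ℝ} (hF : ContDiff ℝ 2 F) (y : Euc n) (v w : Euc n) :
    fderiv ℝ (fderiv ℝ F) y v w = fderiv ℝ (fderiv ℝ F) y w v := by
  have h1 : ContDiff ℝ 1 (fderiv ℝ F) := hF.fderiv_right (le_refl _)
  exact second_derivative_symmetric
    (fun z => ((hF.differentiable (by norm_num)) z).hasFDerivAt)
    ((h1.differentiable one_ne_zero y).hasFDerivAt) v w

lemma clm2_apply_eq_sum {n : ℕ} (B : Euc n →L[ℝ] Euc n →L[ℝ] ℝ) (v w : Euc n) :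
    B v w = ∑ i, ∑ j, v i * w j *
      B (EuclideanSpace.single i 1) (EuclideanSpace.single j 1) := by
  conv_lhs => rw [euc_decomp v, map_sum]
  rw [ContinuousLinearMap.sum_apply]
  refine Finset.sum_congr rfl fun i _ => ?_
  rw [map_smul, ContinuousLinearMap.smul_apply, smul_eq_mul,
    clm_apply_eq_sum (B (EuclideanSpace.single i 1)) w, Finset.mul_sum]
  exact Finset.sum_congr rfl fun j _ => by ring

lemma hess_quad_bound {n : ℕ} {M' : ℝ} (B : Euc n →L[ℝ] Euc n →L[ℝ] ℝ) (v : Euc n)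
    (hM' : 0 ≤ M')
    (hb : ∀ i j, |B (EuclideanSpace.single i 1) (EuclideanSpace.single j 1)| ≤ M')
    (hv : ∑ i, (v i)^2 = 1) :
    |B v v| ≤ n * M' := by
  rw [clm2_apply_eq_sum]
  calc |∑ i, ∑ j, v i * v j * B (EuclideanSpace.single i 1) (EuclideanSpace.single j 1)|
      ≤ ∑ i, |∑ j, v i * v j * B (EuclideanSpace.single i 1) (EuclideanSpace.single j 1)| :=
        Finset.abs_sum_le_sum_abs _ _
    _ ≤ ∑ i, ∑ j, |v i| * |v j| * M' := by
        refine Finset.sum_le_sum fun i _ => ?_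
        refine (Finset.abs_sum_le_sum_abs _ _).trans (Finset.sum_le_sum fun j _ => ?_)
        rw [abs_mul, abs_mul]
        exact mul_le_mul_of_nonneg_left (hb i j) (by positivity)
    _ = (∑ i, |v i|) ^ 2 * M' := by
        rw [sq, Finset.sum_mul_sum, Finset.sum_mul]
        exact Finset.sum_congr rfl fun i _ => by rw [← Finset.sum_mul]
    _ ≤ (n * ∑ i, (v i)^2) * M' := by
        refine mul_le_mul_of_nonneg_right ?_ hM'
        have := sq_sum_le_card_mul_sum_sq (s := (Finset.univ : Finset (Fin n)))
          (f := fun i => |v i|)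
        simpa [sq_abs] using this
    _ = n * M' := by rw [hv, mul_one]

lemma taylor_lower {g g' G : ℝ → ℝ} {K T : ℝ} (hT : 0 ≤ T) (hK : 0 ≤ K)
    (hg : ∀ t, HasDerivAt g (g' t) t)
    (hg' : ∀ t, HasDerivAt g' (G t) t)
    (hGb : ∀ t, |G t| ≤ K)
    (hpos : ∀ t, 0 ≤ g t) :
    0 ≤ g 0 + T * g' 0 + K * T ^ 2 := by
  have hA : ∀ t ∈ Set.Icc (0:ℝ) T, ‖g' t - g' 0‖ ≤ K * T := by
    intro t ht
    have := Convex.norm_image_sub_le_of_norm_hasDerivWithin_le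
      (f := g') (f' := G) (s := Set.Icc (0:ℝ) T)
      (fun z _ => (hg' z).hasDerivWithinAt)
      (fun z _ => by rw [Real.norm_eq_abs]; exact hGb z)
      (convex_Icc 0 T) (Set.left_mem_Icc.2 hT) ht
    calc ‖g' t - g' 0‖ ≤ K * ‖t - 0‖ := this
      _ ≤ K * T := by
        rw [sub_zero, Real.norm_eq_abs, abs_of_nonneg ht.1]
        exact mul_le_mul_of_nonneg_left ht.2 hK
  set h : ℝ → ℝ := fun t => g t - g' 0 * t with hh
  have hB : ‖h T - h 0‖ ≤ (K * T) * ‖T - 0‖ := by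
    refine Convex.norm_image_sub_le_of_norm_hasDerivWithin_le
      (f := h) (f' := fun t => g' t - g' 0) (s := Set.Icc (0:ℝ) T)
      (fun z _ => (((hg z).sub ((hasDerivAt_id z).const_mul (g' 0))).congr_deriv
        (by ring)).hasDerivWithinAt)
      (fun z hz => hA z hz) (convex_Icc 0 T) (Set.left_mem_Icc.2 hT)
      (Set.right_mem_Icc.2 hT)
  have h0 : h 0 = g 0 := by simp [hh]
  have hT' : h T = g T - g' 0 * T := rfl
  rw [h0, hT', sub_zero, Real.norm_eq_abs, Real.norm_eq_abs, abs_of_nonneg hT] at hB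
  have := abs_le.1 hB
  have hgT := hpos T
  nlinarith [this.1, this.2]

lemma grad_bound {n : ℕ} {F : Euc n → ℝ} {M' : ℝ} (hn : (n:ℝ) ≤ 2) (hF : ContDiff ℝ 2 F)
    (hpos : ∀ y, 0 ≤ F y) (hM' : 0 ≤ M')
    (hb : ∀ y i j, |fderiv ℝ (fderiv ℝ F) y (EuclideanSpace.single i 1)
      (EuclideanSpace.single j 1)| ≤ M')
    (hpd : ∀ y i, |pd i F y| ≤ M') (x : Euc n) :
    ∑ i, (pd i F x)^2 ≤ 8 * M' * F x := by
  set S := ∑ i, (pd i F x)^2 with hS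
  have hS0 : 0 ≤ S := Finset.sum_nonneg fun i _ => sq_nonneg _
  rcases eq_or_lt_of_le hS0 with hz | hSpos
  · have : (0:ℝ) ≤ 8 * M' * F x := mul_nonneg (by positivity) (hpos x)
    linarith [hz]
  have hM'pos : 0 < M' := by
    by_contra h
    push_neg at h
    have hM0 : M' = 0 := le_antisymm h hM'
    have : S ≤ 0 := by
      rw [hS]
      refine Finset.sum_nonpos fun i _ => ?_
      have := hpd x i
      rw [hM0] at this
      have : pd i F x = 0 := abs_nonpos_iff.1 this
      simp [this]
    linarith
  set s := Real.sqrt S with hsdef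
  have hspos : 0 < s := Real.sqrt_pos.2 hSpos
  have hs2 : s ^ 2 = S := Real.sq_sqrt hS0
  set v : Euc n := WithLp.toLp 2 (fun i => -s⁻¹ * pd i F x) with hv
  have hvi : ∀ i, v i = -s⁻¹ * pd i F x := fun i => rfl
  have hvsum : ∑ i, (v i)^2 = 1 := by
    have : ∀ i, (v i)^2 = s⁻¹^2 * (pd i F x)^2 := fun i => by rw [hvi]; ring
    rw [Finset.sum_congr rfl fun i _ => this i, ← Finset.mul_sum, ← hS, ← hs2]
    field_simp
  set K := 2 * M' with hKdef
  have hKpos : 0 < K := by positivity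
  set γ : ℝ → Euc n := fun t => x + t • v with hγdef
  have hγ : ∀ t, HasDerivAt γ v t := by
    intro t
    have h1 : HasDerivAt (fun u : ℝ => u • v) ((1:ℝ) • v) t := (hasDerivAt_id t).smul_const v
    rw [one_smul] at h1
    exact h1.const_add x
  have hFdiff : Differentiable ℝ F := hF.differentiable (by norm_num)
  set g : ℝ → ℝ := fun t => F (γ t) with hgdef
  set g' : ℝ → ℝ := fun t => fderiv ℝ F (γ t) v with hg'def
  set G : ℝ → ℝ := fun t => fderiv ℝ (fderiv ℝ F) (γ t) v v with hGdef
  have hgD : ∀ t, HasDerivAt g (g' t) t := fun t =>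
    (hFdiff (γ t)).hasFDerivAt.comp_hasDerivAt t (hγ t)
  have hg'D : ∀ t, HasDerivAt g' (G t) t := by
    intro t
    have := (hasFDerivAt_pdvec hF v (γ t)).comp_hasDerivAt t (hγ t)
    exact this
  have hGb : ∀ t, |G t| ≤ K := by
    intro t
    have := hess_quad_bound (fderiv ℝ (fderiv ℝ F) (γ t)) v hM' (hb (γ t)) hvsum
    calc |G t| ≤ n * M' := this
      _ ≤ 2 * M' := mul_le_mul_of_nonneg_right hn hM'
  have hgpos : ∀ t, 0 ≤ g t := fun t => hpos (γ t)
  have hT : (0:ℝ) ≤ s / (2 * K) := by positivity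
  have key := taylor_lower hT hKpos.le hgD hg'D hGb hgpos
  have hγ0 : γ 0 = x := by simp [hγdef]
  have hg0 : g 0 = F x := by rw [hgdef]; simp [hγ0]
  have hg'0 : g' 0 = -s := by
    rw [hg'def]
    simp only [hγ0]
    rw [clm_apply_eq_sum]
    have : ∀ i, v i * fderiv ℝ F x (EuclideanSpace.single i 1) = -s⁻¹ * (pd i F x)^2 := by
      intro i
      rw [hvi]
      have : fderiv ℝ F x (EuclideanSpace.single i 1) = pd i F x := rfl
      rw [this]; ring
    rw [Finset.sum_congr rfl fun i _ => this i, ← Finset.mul_sum, ← hS, ← hs2]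
    field_simp
  rw [hg0, hg'0] at key
  have hexp : F x + s / (2*K) * (-s) + K * (s / (2*K))^2 = F x - s^2/(4*K) := by
    field_simp
    ring
  rw [hexp] at key
  have h4K : (0:ℝ) < 4 * K := by positivity
  have hdiv : s^2 / (4*K) ≤ F x := by linarith
  have : s^2 ≤ 4 * K * F x := by
    have := (div_le_iff₀ h4K).1 hdiv
    linarith
  rw [hs2] at this
  calc S ≤ 4 * K * F x := this
    _ = 8 * M' * F x := by rw [hKdef]; ring

lemma sin_construction {n : ℕ} (L : Euc n →L[ℝ] ℝ) (x : Euc n) {p : ℝ} (hp : 0 < p) :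
    ∃ F : Euc n → ℝ, ContDiff ℝ 2 F ∧ (∀ y, 0 ≤ F y) ∧
      (F x = p) ∧ (fderiv ℝ F x = L) ∧
      (∀ y, (F y)^2 ≤ 4 * p^2) ∧
      (∀ y i, (pd i F y)^2 ≤ (L (EuclideanSpace.single i 1))^2) ∧
      (∀ y i j, (pd i (pd j F) y)^2 ≤
        p⁻¹^2 * ((L (EuclideanSpace.single i 1))^2 * (L (EuclideanSpace.single j 1))^2)) := by
  set u : Euc n → ℝ := fun y => p⁻¹ * L (y - x) with hu
  have huf : ∀ y, HasFDerivAt u (p⁻¹ • L) y := by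
    intro y
    have : u = fun y => p⁻¹ * L y - p⁻¹ * L x := by
      funext z; rw [hu]; simp [map_sub]; ring
    rw [this]
    exact (L.hasFDerivAt.const_mul p⁻¹).sub_const _
  set F : Euc n → ℝ := fun y => p + p * Real.sin (u y) with hF
  have hFd : ∀ y, HasFDerivAt F (Real.cos (u y) • L) y := by
    intro y
    have h1 : HasFDerivAt (fun z => Real.sin (u z)) (Real.cos (u y) • (p⁻¹ • L)) y :=
      (Real.hasDerivAt_sin (u y)).comp_hasFDerivAt y (huf y)
    have h2 := (h1.const_mul p).const_add p
    have heq : p • (Real.cos (u y) • p⁻¹ • L) = Real.cos (u y) • L := by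
      rw [smul_smul, smul_smul]
      congr 1
      field_simp
    rw [heq] at h2
    exact h2
  have hfd : ∀ y, fderiv ℝ F y = Real.cos (u y) • L := fun y => (hFd y).fderiv
  have hpdF : ∀ y i, pd i F y = Real.cos (u y) * L (EuclideanSpace.single i 1) := by
    intro y i
    rw [pd, hfd y]; rfl
  have hpdFfun : ∀ j, pd j F = fun y => Real.cos (u y) * L (EuclideanSpace.single j 1) := by
    intro j; funext y; exact hpdF y j
  have hcosd : ∀ y, HasFDerivAt (fun z => Real.cos (u z)) ((-Real.sin (u y)) • (p⁻¹ • L)) y :=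
    fun y => (Real.hasDerivAt_cos (u y)).comp_hasFDerivAt y (huf y)
  have hpdpd : ∀ y i j, pd i (pd j F) y =
      -Real.sin (u y) * p⁻¹ * L (EuclideanSpace.single j 1) * L (EuclideanSpace.single i 1) := by
    intro y i j
    rw [pd, hpdFfun j]
    have h3 : HasFDerivAt (fun z => Real.cos (u z) * L (EuclideanSpace.single j 1))
        ((L (EuclideanSpace.single j 1)) • ((-Real.sin (u y)) • (p⁻¹ • L))) y :=
      (hcosd y).mul_const _
    rw [h3.fderiv]
    simp only [ContinuousLinearMap.smul_apply, smul_eq_mul]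
    ring
  have hux : u x = 0 := by rw [hu]; simp
  refine ⟨F, ?_, ?_, ?_, ?_, ?_, ?_, ?_⟩
  · rw [hF]
    refine ContDiff.add contDiff_const (ContDiff.mul contDiff_const ?_)
    exact Real.contDiff_sin.comp ((contDiff_const.mul
      (L.contDiff.comp (contDiff_id.sub contDiff_const))) : ContDiff ℝ 2 u)
  · intro y
    rw [hF]
    show 0 ≤ p + p * Real.sin (u y)
    nlinarith [Real.neg_one_le_sin (u y), hp, mul_nonneg hp.le
      (by linarith [Real.neg_one_le_sin (u y)] : 0 ≤ Real.sin (u y) + 1)]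
  · rw [hF]; simp [hux]
  · rw [hfd x, hux]; simp
  · intro y
    rw [hF]
    show (p + p * Real.sin (u y))^2 ≤ 4 * p^2
    have h4 : (1 + Real.sin (u y))^2 ≤ 4 := by
      nlinarith [Real.neg_one_le_sin (u y), Real.sin_le_one (u y)]
    nlinarith [mul_le_mul_of_nonneg_left h4 (sq_nonneg p)]
  · intro y i
    rw [hpdF]
    have hc : Real.cos (u y)^2 ≤ 1 := Real.cos_sq_le_one (u y)
    nlinarith [mul_le_mul_of_nonneg_right hc (sq_nonneg (L (EuclideanSpace.single i 1)))]
  · intro y i j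
    rw [hpdpd]
    have hs : Real.sin (u y)^2 ≤ 1 := Real.sin_sq_le_one (u y)
    nlinarith [mul_le_mul_of_nonneg_right hs
      (sq_nonneg (p⁻¹ * L (EuclideanSpace.single i 1) * L (EuclideanSpace.single j 1)))]

lemma pd_zero {n : ℕ} (i : Fin n) : pd i (fun _ : Euc n => (0:ℝ)) = fun _ => 0 := by
  funext y
  simp [pd]

lemma c2_zero {n : ℕ} (y : Euc n) : c2SqAt (fun _ : Euc n => (0:ℝ)) y = 0 := by
  rw [c2SqAt]
  simp [pd_zero]

lemma c2_nonneg {n : ℕ} (F : Euc n → ℝ) (x : Euc n) : 0 ≤ c2SqAt F x := by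
  rw [c2SqAt]
  have h1 : (0:ℝ) ≤ ∑ i, (pd i F x)^2 := Finset.sum_nonneg fun i _ => sq_nonneg _
  have h2 : (0:ℝ) ≤ ∑ p ∈ Finset.univ.filter (fun p : Fin n × Fin n => p.1 ≤ p.2),
      (pd p.1 (pd p.2 F) x) ^ 2 := Finset.sum_nonneg fun q _ => sq_nonneg _
  positivity

/-! ### The main theorem -/

set_option maxHeartbeats 1000000 in
/-- **Lemma 4.6.** For `n ∈ {1, 2}` there is a constant `C`, depending only on `n`,
with `Γ₊(x, ∅, C⁻¹·M) ⊆ 𝒞₊(x, M) ⊆ Γ₊(x, ∅, C·M)` for all `x ∈ ℝⁿ` and `M ≥ 0`. -/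
theorem CPlus_approximates_GammaPlusEmpty :
    ∀ n : ℕ, n = 1 ∨ n = 2 →
      ∃ C : ℝ, 0 < C ∧
        ∀ (x : Euc n) (M : ℝ), 0 ≤ M →
          GammaPlusEmpty x (C⁻¹ * M) ⊆ CPlus x M ∧
          CPlus x M ⊆ GammaPlusEmpty x (C * M) := by
  intro n hn
  have hn2 : (n:ℝ) ≤ 2 := by rcases hn with rfl | rfl <;> norm_num
  refine ⟨8, by norm_num, fun x M hM => ⟨?_, ?_⟩⟩
  · -- Γ₊(x, ∅, 8⁻¹ M) ⊆ 𝒞₊(x, M)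
    rintro P ⟨F, hF, hpos, hC2, hjet⟩
    set M' : ℝ := (8:ℝ)⁻¹ * M with hM'def
    have hM' : 0 ≤ M' := by positivity
    have hc2le : ∀ y, c2SqAt F y ≤ M'^2 := fun y =>
      le_sq_of_sqrt_le (c2_nonneg F y) (hC2 y)
    have hsum_nonneg : ∀ y, (0:ℝ) ≤ ∑ p ∈ Finset.univ.filter
        (fun p : Fin n × Fin n => p.1 ≤ p.2), (pd p.1 (pd p.2 F) y) ^ 2 :=
      fun y => Finset.sum_nonneg fun q _ => sq_nonneg _
    have hsum1_nonneg : ∀ y, (0:ℝ) ≤ ∑ i, (pd i F y)^2 :=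
      fun y => Finset.sum_nonneg fun i _ => sq_nonneg _
    have hpd : ∀ y i, |pd i F y| ≤ M' := by
      intro y i
      have h1 : (pd i F y)^2 ≤ c2SqAt F y := by
        rw [c2SqAt]
        have h := Finset.single_le_sum (f := fun i => (pd i F y)^2)
          (fun i _ => sq_nonneg _) (Finset.mem_univ i)
        have h' : (pd i F y)^2 ≤ ∑ k, (pd k F y)^2 := h
        nlinarith [hsum_nonneg y, sq_nonneg (F y)]
      have := h1.trans (hc2le y)
      nlinarith [abs_nonneg (pd i F y), sq_abs (pd i F y)]
    have hpdpd : ∀ y i j, i ≤ j → |pd i (pd j F) y| ≤ M' := by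
      intro y i j hij
      have h1 : (pd i (pd j F) y)^2 ≤ c2SqAt F y := by
        rw [c2SqAt]
        have hmem : ((i, j) : Fin n × Fin n) ∈
            Finset.univ.filter (fun q : Fin n × Fin n => q.1 ≤ q.2) := by
          simp [hij]
        have h := Finset.single_le_sum
          (f := fun q : Fin n × Fin n => (pd q.1 (pd q.2 F) y)^2)
          (fun q _ => sq_nonneg _) hmem
        have h' : (pd i (pd j F) y)^2 ≤ ∑ q ∈ Finset.univ.filter
            (fun q : Fin n × Fin n => q.1 ≤ q.2), (pd q.1 (pd q.2 F) y)^2 := h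
        nlinarith [hsum1_nonneg y, sq_nonneg (F y)]
      have := h1.trans (hc2le y)
      nlinarith [abs_nonneg (pd i (pd j F) y), sq_abs (pd i (pd j F) y)]
    have hD2 : ∀ y i j, |fderiv ℝ (fderiv ℝ F) y (EuclideanSpace.single i 1)
        (EuclideanSpace.single j 1)| ≤ M' := by
      intro y i j
      rcases le_total i j with hij | hji
      · rw [← pd_pd_eq hF i j y]
        exact hpdpd y i j hij
      · rw [d2_symm hF y, ← pd_pd_eq hF j i y]
        exact hpdpd y j i hji
    have hgrad := grad_bound hn2 hF hpos hM' hD2 hpd x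
    set L₀ := fderiv ℝ F x with hL₀
    have hPeq : P = fun y => L₀ y + (F x - L₀ x) := by
      rw [← hjet]
      funext y
      show F x + L₀ (y - x) = L₀ y + (F x - L₀ x)
      rw [map_sub]
      ring
    have hPx : P x = F x := by rw [hPeq]; simp
    have hpdP : ∀ i, pd i P x = pd i F x := by
      intro i
      rw [hPeq, pd_affine]
      rfl
    have hfdP : fderiv ℝ P x = L₀ := by rw [hPeq, fderiv_affine]
    refine ⟨⟨L₀, F x - L₀ x, hPeq⟩, ?_, ?_, ?_⟩
    · -- jet norm bound
      rw [hPx]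
      rw [Finset.sum_congr rfl fun i _ => by rw [hpdP i]]
      have h1 : (F x)^2 + ∑ i, (pd i F x)^2 ≤ M'^2 := by
        have := hc2le x
        rw [c2SqAt] at this
        linarith [hsum_nonneg x]
      have h2 : Real.sqrt ((F x)^2 + ∑ i, (pd i F x)^2) ≤ Real.sqrt (M'^2) :=
        Real.sqrt_le_sqrt h1
      rw [Real.sqrt_sq hM'] at h2
      have : M' ≤ M := by rw [hM'def]; nlinarith
      linarith
    · rw [hPx]; exact hpos x
    · rw [hfdP, hPx]
      have h1 : ‖L₀‖ ≤ Real.sqrt (∑ i, (L₀ (EuclideanSpace.single i 1))^2) :=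
        opNorm_le_sqrt_sum L₀
      have heqs : ∑ i, (L₀ (EuclideanSpace.single i 1))^2 = ∑ i, (pd i F x)^2 := rfl
      rw [heqs] at h1
      have h2 : ∑ i, (pd i F x)^2 ≤ 4 * M * F x := by
        have : 8 * M' * F x ≤ 4 * M * F x := by
          rw [hM'def]
          nlinarith [hpos x]
        linarith
      exact h1.trans (Real.sqrt_le_sqrt h2)
  · -- 𝒞₊(x, M) ⊆ Γ₊(x, ∅, 8M)
    rintro P ⟨⟨L, c, hPeq⟩, hnorm, hpx, hgrad⟩
    subst hPeq
    set p : ℝ := L x + c with hpdef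
    have hpx' : 0 ≤ p := hpx
    have hpdP : ∀ i, pd i (fun y => L y + c) x = L (EuclideanSpace.single i 1) :=
      fun i => pd_affine L c i x
    have hfdP : fderiv ℝ (fun y => L y + c) x = L := fderiv_affine L c x
    have hnorm' : p^2 + ∑ i, (L (EuclideanSpace.single i 1))^2 ≤ M^2 := by
      have h0 : ((fun y => L y + c) x)^2 + ∑ i, (pd i (fun y => L y + c) x)^2 =
          p^2 + ∑ i, (L (EuclideanSpace.single i 1))^2 := by
        rw [Finset.sum_congr rfl fun i _ => by rw [hpdP i]]
      refine le_sq_of_sqrt_le ?_ ?_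
      · have : (0:ℝ) ≤ ∑ i, (L (EuclideanSpace.single i 1))^2 :=
          Finset.sum_nonneg fun i _ => sq_nonneg _
        positivity
      · rw [← h0]; exact hnorm
    set S : ℝ := ∑ i, (L (EuclideanSpace.single i 1))^2 with hSdef
    have hS0 : 0 ≤ S := Finset.sum_nonneg fun i _ => sq_nonneg _
    have hSM : S ≤ M^2 := by nlinarith [sq_nonneg p]
    have hpM : p ≤ M := by nlinarith
    have hLsq : ‖L‖^2 ≤ 4 * M * p := by
      refine sq_le_of_le_sqrt' (norm_nonneg L) (by positivity) ?_
      rw [← hfdP]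
      exact hgrad
    have hS4Mp : S ≤ 4 * M * p := (sum_sq_le_opNorm_sq L).trans hLsq
    rcases eq_or_lt_of_le hpx' with hp0 | hppos
    · -- p = 0 case: L = 0, c = 0, take F = 0
      have hL2 : ‖L‖^2 ≤ 0 := by rw [← hp0] at hLsq; linarith [hLsq]
      have hL0 : L = 0 := by
        have : ‖L‖ = 0 := by nlinarith [norm_nonneg L, sq_nonneg ‖L‖]
        exact norm_eq_zero.1 this
      have hc0 : c = 0 := by
        have : L x + c = 0 := hp0.symm
        rw [hL0] at this
        simpa using this
      refine ⟨fun _ => 0, contDiff_const, fun y => le_refl 0, ?_, ?_⟩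
      · intro y
        rw [c2_zero]
        simp [Real.sqrt_zero]
        positivity
      · funext y
        rw [jet]
        simp [hL0, hc0]
    · -- p > 0 case: sine construction
      obtain ⟨F, hFc, hFpos, hFx, hFfd, hFb, hFpd, hFpdpd⟩ := sin_construction L x hppos
      refine ⟨F, hFc, hFpos, ?_, ?_⟩
      · -- C² norm bound
        intro y
        have hb1 : (F y)^2 ≤ 4 * p^2 := hFb y
        have hb2 : ∑ i, (pd i F y)^2 ≤ S := by
          rw [hSdef]
          exact Finset.sum_le_sum fun i _ => hFpd y i
        have hb3 : ∑ q ∈ Finset.univ.filter (fun q : Fin n × Fin n => q.1 ≤ q.2),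
            (pd q.1 (pd q.2 F) y)^2 ≤ p⁻¹^2 * S^2 := by
          calc ∑ q ∈ Finset.univ.filter (fun q : Fin n × Fin n => q.1 ≤ q.2),
              (pd q.1 (pd q.2 F) y)^2
              ≤ ∑ q ∈ Finset.univ.filter (fun q : Fin n × Fin n => q.1 ≤ q.2),
                p⁻¹^2 * ((L (EuclideanSpace.single q.1 1))^2 *
                  (L (EuclideanSpace.single q.2 1))^2) :=
                Finset.sum_le_sum fun q _ => hFpdpd y q.1 q.2
            _ ≤ ∑ q : Fin n × Fin n, p⁻¹^2 * ((L (EuclideanSpace.single q.1 1))^2 *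
                  (L (EuclideanSpace.single q.2 1))^2) := by
                refine Finset.sum_le_sum_of_subset_of_nonneg (Finset.filter_subset _ _)
                  fun q _ _ => by positivity
            _ = p⁻¹^2 * S^2 := by
                rw [Fintype.sum_prod_type]
                have h1 : ∀ i : Fin n, ∑ j : Fin n,
                    p⁻¹^2 * ((L (EuclideanSpace.single i 1))^2 *
                      (L (EuclideanSpace.single j 1))^2) =
                    p⁻¹^2 * (L (EuclideanSpace.single i 1))^2 * S := by
                  intro i
                  rw [hSdef, Finset.mul_sum]
                  exact Finset.sum_congr rfl fun j _ => by ring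
                rw [Finset.sum_congr rfl fun i _ => h1 i, ← Finset.sum_mul,
                  ← Finset.mul_sum, ← hSdef]
                ring
        have hb3' : p⁻¹^2 * S^2 ≤ 16 * M^2 := by
          have h1 : S^2 ≤ 16 * M^2 * p^2 := by nlinarith
          have h2 : p⁻¹^2 * S^2 ≤ p⁻¹^2 * (16 * M^2 * p^2) :=
            mul_le_mul_of_nonneg_left h1 (by positivity)
          have h3 : p⁻¹^2 * (16 * M^2 * p^2) = 16 * M^2 := by
            field_simp
          linarith
        have hc2 : c2SqAt F y ≤ (8 * M)^2 := by
          rw [c2SqAt]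
          nlinarith [hb1, hb2, hb3, hb3', sq_nonneg M]
        calc Real.sqrt (c2SqAt F y) ≤ Real.sqrt ((8*M)^2) := Real.sqrt_le_sqrt hc2
          _ = 8 * M := Real.sqrt_sq (by positivity)
      · -- jet equals P
        funext y
        rw [jet, hFx, hFfd, map_sub]
        show p + (L y - L x) = L y + c
        rw [hpdef]
        ring
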